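/- The weighted negative entropy Φ(y) = ∑_{i=1}^n s_i y_i log(y_i), defined on the positive orthant, is θ-strongly convex with respect to the weighted ℓ1-norm ‖y‖_{ℓ1(s)} = ∑_i s_i |y_i| on the set {y ∈ (0,1]^n}, with θ = 1/(s_max · n), where s_max = max_i s_i; i.e., for all y, y' in (0,1]^n, (∇Φ(y') − ∇Φ(y))ᵀ(y' − y) ≥ θ·‖y' − y‖²_{ℓ1(s)}. -/

import Mathlib

lemma log_sub_log_ge (a b : ℝ) (hb : 0 < b) (ha0 : 0 < a) (ha1 : a ≤ 1) (hab : b ≤ a) :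
    Real.log a - Real.log b ≥ a - b := by
  have h := Real.log_le_sub_one_of_pos (x := b / a) (by positivity)
  rw [Real.log_div hb.ne' ha0.ne'] at h
  have h2 : Real.log a - Real.log b ≥ (a - b) / a := by
    have he : b / a - 1 = -((a - b) / a) := by field_simp; ring
    linarith [he ▸ h]
  have h3 : (a - b) / a ≥ a - b := by
    rw [ge_iff_le, le_div_iff₀ ha0]
    nlinarith
  linarith

lemma log_diff_mul_ge (a b : ℝ) (ha : a ∈ Set.Ioc (0:ℝ) 1) (hb : b ∈ Set.Ioc (0:ℝ) 1) :
    (Real.log a - Real.log b) * (a - b) ≥ (a - b) ^ 2 := by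
  obtain ⟨ha0, ha1⟩ := ha
  obtain ⟨hb0, hb1⟩ := hb
  rcases le_total b a with h | h
  · have := log_sub_log_ge a b hb0 ha0 ha1 h
    nlinarith
  · have := log_sub_log_ge b a ha0 hb0 hb1 h
    nlinarith

theorem stmt_7 (n : ℕ) (s : Fin (n + 1) → ℝ) (hs : ∀ i, 0 < s i)
    (y y' : Fin (n + 1) → ℝ)
    (hy : ∀ i, y i ∈ Set.Ioc (0 : ℝ) 1) (hy' : ∀ i, y' i ∈ Set.Ioc (0 : ℝ) 1) :
    ∑ i, (s i * (Real.log (y' i) + 1) - s i * (Real.log (y i) + 1)) * (y' i - y i) ≥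
      (1 / ((Finset.univ.sup' Finset.univ_nonempty s) * ((n : ℝ) + 1))) *
        (∑ i, s i * |y' i - y i|) ^ 2 := by
  set M := Finset.univ.sup' Finset.univ_nonempty s with hM
  have hM0 : 0 < M := lt_of_lt_of_le (hs 0) (Finset.le_sup' s (Finset.mem_univ 0))
  have hMle : ∀ i, s i ≤ M := fun i => Finset.le_sup' s (Finset.mem_univ i)
  -- Step 1: LHS ≥ ∑ s i * (y' i - y i)^2
  have step1 : ∑ i, s i * (y' i - y i) ^ 2 ≤
      ∑ i, (s i * (Real.log (y' i) + 1) - s i * (Real.log (y i) + 1)) * (y' i - y i) := by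
    apply Finset.sum_le_sum
    intro i _
    have h := log_diff_mul_ge (y' i) (y i) (hy' i) (hy i)
    have hsi := (hs i).le
    calc s i * (y' i - y i) ^ 2 ≤ s i * ((Real.log (y' i) - Real.log (y i)) * (y' i - y i)) :=
          mul_le_mul_of_nonneg_left h hsi
      _ = (s i * (Real.log (y' i) + 1) - s i * (Real.log (y i) + 1)) * (y' i - y i) := by ring
  -- Step 2: Cauchy-Schwarz
  have cs : (∑ i, s i * |y' i - y i|) ^ 2 ≤
      (∑ i : Fin (n + 1), s i) * ∑ i, s i * (y' i - y i) ^ 2 := by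
    have h := Finset.sum_mul_sq_le_sq_mul_sq Finset.univ
      (fun i => Real.sqrt (s i)) (fun i => Real.sqrt (s i) * |y' i - y i|)
    have e1 : ∀ i : Fin (n+1), Real.sqrt (s i) * (Real.sqrt (s i) * |y' i - y i|)
        = s i * |y' i - y i| := by
      intro i
      rw [← mul_assoc, Real.mul_self_sqrt (hs i).le]
    have e2 : ∀ i : Fin (n+1), (Real.sqrt (s i)) ^ 2 = s i := fun i =>
      Real.sq_sqrt (hs i).le
    have e3 : ∀ i : Fin (n+1), (Real.sqrt (s i) * |y' i - y i|) ^ 2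
        = s i * (y' i - y i) ^ 2 := by
      intro i
      rw [mul_pow, Real.sq_sqrt (hs i).le, sq_abs]
    simp only [e1, e2, e3] at h
    exact h
  -- Step 3: ∑ s ≤ M * (n+1)
  have hsum : (∑ i : Fin (n + 1), s i) ≤ M * ((n : ℝ) + 1) := by
    calc (∑ i : Fin (n + 1), s i) ≤ ∑ _i : Fin (n + 1), M := Finset.sum_le_sum fun i _ => hMle i
      _ = M * ((n : ℝ) + 1) := by
        rw [Finset.sum_const, Finset.card_univ, Fintype.card_fin, nsmul_eq_mul]
        push_cast; ring
  have hQ : 0 ≤ ∑ i, s i * (y' i - y i) ^ 2 :=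
    Finset.sum_nonneg fun i _ => mul_nonneg (hs i).le (sq_nonneg _)
  have hMn : 0 < M * ((n : ℝ) + 1) := by positivity
  have key : (1 / (M * ((n : ℝ) + 1))) * (∑ i, s i * |y' i - y i|) ^ 2 ≤
      ∑ i, s i * (y' i - y i) ^ 2 := by
    rw [div_mul_eq_mul_div, one_mul, div_le_iff₀ hMn]
    calc (∑ i, s i * |y' i - y i|) ^ 2
        ≤ (∑ i : Fin (n + 1), s i) * ∑ i, s i * (y' i - y i) ^ 2 := cs
      _ ≤ (M * ((n : ℝ) + 1)) * ∑ i, s i * (y' i - y i) ^ 2 :=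
          mul_le_mul_of_nonneg_right hsum hQ
      _ = (∑ i, s i * (y' i - y i) ^ 2) * (M * ((n : ℝ) + 1)) := by ring
  exact le_trans key step1
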